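/- For any symmetric positive semidefinite block matrix P with blocks P = [[P₁₁, P₁₂],[P₂₁, P₂₂]] that is an orthogonal projection onto the range of [I; F]ᵀ (i.e., the column span of the matrix with top block I_k and bottom block F), the complement I − P satisfies: I − P ⪯ [[Fᵀ F, −(I+FᵀF)^{−1}Fᵀ],[−F(I+FᵀF)^{−1}, I]] in the Loewner order. -/

import Mathlib

open Matrix BigOperators

lemma blockdiag_posSemidef {k m : ℕ} {X : Matrix (Fin k) (Fin k) ℝ}
    {Y : Matrix (Fin m) (Fin m) ℝ} (hX : X.PosSemidef) (hY : Y.PosSemidef) :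
    (Matrix.fromBlocks X 0 0 Y).PosSemidef := by
  rw [Matrix.posSemidef_iff_dotProduct_mulVec]
  constructor
  · rw [Matrix.IsHermitian, Matrix.fromBlocks_conjTranspose]
    simp only [Matrix.conjTranspose_zero]
    rw [show Xᴴ = X from hX.1, show Yᴴ = Y from hY.1]
  · intro x
    rw [Matrix.fromBlocks_mulVec, Matrix.dotProduct_block]
    simp only [Matrix.zero_mulVec, add_zero, zero_add, Sum.elim_comp_inl, Sum.elim_comp_inr]
    have h1 := hX.dotProduct_mulVec_nonneg (x ∘ Sum.inl)
    have h2 := hY.dotProduct_mulVec_nonneg (x ∘ Sum.inr)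
    simp only [star_trivial] at h1 h2 ⊢
    exact add_nonneg h1 h2

/-- Loewner bound for the complement of the orthogonal projector onto `range([I; F])`:
`I − P ⪯ [[FᵀF, −(I+FᵀF)⁻¹Fᵀ], [−F(I+FᵀF)⁻¹, I]]`. -/
theorem stmt7 {k m : ℕ} (F : Matrix (Fin m) (Fin k) ℝ) :
    let G : Matrix (Fin k) (Fin k) ℝ := (1 + Fᵀ * F)⁻¹
    let P : Matrix (Fin k ⊕ Fin m) (Fin k ⊕ Fin m) ℝ :=
      Matrix.fromBlocks G (G * Fᵀ) (F * G) (F * G * Fᵀ)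
    (Matrix.fromBlocks (Fᵀ * F) (-(G * Fᵀ)) (-(F * G)) 1 - (1 - P)).PosSemidef := by
  intro G P
  set A : Matrix (Fin k) (Fin k) ℝ := Fᵀ * F with hAdef
  have hA : A.PosSemidef := by
    have := Matrix.posSemidef_conjTranspose_mul_self F
    rwa [Matrix.conjTranspose_eq_transpose_of_trivial] at this
  have hS : (1 + A).PosDef := Matrix.PosDef.one.add_posSemidef hA
  have hG : G.PosDef := by
    have := hS.inv
    simpa [G] using this
  have hdet : IsUnit (1 + A).det := (Matrix.isUnit_iff_isUnit_det _).mp hS.isUnit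
  have hSG : (1 + A) * G = 1 := Matrix.mul_nonsing_inv _ hdet
  have hGS : G * (1 + A) = 1 := Matrix.nonsing_inv_mul _ hdet
  have hcomm : G * A = A * G := by
    calc G * A = G * A * ((1 + A) * G) := by rw [hSG, mul_one]
    _ = G * (A * (1 + A)) * G := by noncomm_ring
    _ = G * ((1 + A) * A) * G := by noncomm_ring
    _ = (G * (1 + A)) * (A * G) := by noncomm_ring
    _ = A * G := by rw [hGS, one_mul]
  have key : A - 1 + G = A * G * A := by
    calc A - 1 + G = (A - 1) * ((1 + A) * G) + G := by rw [hSG, mul_one]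
    _ = ((A - 1) * (1 + A) + 1) * G := by noncomm_ring
    _ = (A * A) * G := by
        congr 1
        noncomm_ring
    _ = A * (G * A) := by rw [hcomm]; noncomm_ring
    _ = A * G * A := by rw [mul_assoc]
  have hblock1 : (A - 1 + G).PosSemidef := by
    rw [key]
    have := hG.posSemidef.conjTranspose_mul_mul_same A
    rwa [show Aᴴ = A from hA.1] at this
  have hblock2 : (F * G * Fᵀ).PosSemidef := by
    have := hG.posSemidef.mul_mul_conjTranspose_same F
    rwa [Matrix.conjTranspose_eq_transpose_of_trivial] at this
  have hmain : Matrix.fromBlocks (Fᵀ * F) (-(G * Fᵀ)) (-(F * G)) 1 - (1 - P)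
      = Matrix.fromBlocks (A - 1 + G) 0 0 (F * G * Fᵀ) := by
    ext (i | i) (j | j) <;>
      simp [P, Matrix.fromBlocks, Matrix.sub_apply, Matrix.one_apply] <;> ring
  rw [hmain]
  exact blockdiag_posSemidef hblock1 hblock2
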